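/- arXiv:2403.07640 — 11 statements merged into one kernel-verified Lean document; each statement's English description precedes it below -/
import Mathlib

section
/- If a finite directed graph G = (V,E) is undirected (i.e., its edge relation is symmetric) and is (r,s)-robust with l hops with respect to a set F ⊆ V, where r ≥ 1 and s ≥ 1, then G is r-connected: for every set S ⊆ V with |S| < r and S ≠ V, the subgraph of G induced by V∖S is connected. -/
/-!  Common definitions: multi-hop robustness notions for finite directed graphs,
following Yuan & Ishii, "Asynchronous Approximate Byzantine Consensus".

A directed graph on vertex type `V` is given by its edge relation `E : V → V → Prop`,
where `E j i` means `(j,i)` is an edge (node `i` can receive information from `j`). -/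

/-- `p` is an at-most-`l`-hop path from `j` to `i`: a list of distinct vertices,
consecutive ones joined by edges, starting at `j`, ending at `i`, with at least one
edge (length ≥ 2 as a vertex list) and at most `l` edges (length ≤ l+1). -/
def IsHopPath {V : Type*} (E : V → V → Prop) (l : ℕ) (j i : V) (p : List V) : Prop :=
  p.Nodup ∧ p.Chain' E ∧ p.head? = some j ∧ p.getLast? = some i ∧
    2 ≤ p.length ∧ p.length ≤ l + 1

/-- The intermediate nodes of a path: all vertices except the first and the last. -/
def interm {V : Type*} (p : List V) : List V := p.tail.dropLast

/-- Node `i` is in `Z^r_S` with respect to `F`: `i ∈ S` and there are `r` pairwise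
independent paths of at most `l` hops, each starting outside `S` and ending at `i`,
none of which has an intermediate node in `F`.  Independence means that two distinct
paths share no vertex other than `i`. -/
def MemZ {V : Type*} (E : V → V → Prop) (l : ℕ) (F S : Set V) (r : ℕ) (i : V) : Prop :=
  i ∈ S ∧ ∃ P : Fin r → List V,
    (∀ a, ∃ j, j ∉ S ∧ IsHopPath E l j i (P a)) ∧
    (∀ a, ∀ v ∈ interm (P a), v ∉ F) ∧
    (∀ a b, a ≠ b → ∀ v, v ∈ P a → v ∈ P b → v = i)

/-- The set `Z^r_S` with respect to `F`. -/
def ZSet {V : Type*} (E : V → V → Prop) (l : ℕ) (F S : Set V) (r : ℕ) : Set V :=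
  {i | MemZ E l F S r i}

/-- `(r,s)`-robustness with `l` hops with respect to `F`, where the nonempty disjoint
subsets range over subsets of a ground vertex set `W` (used for induced subgraphs). -/
def RSRobustOn {V : Type*} (E : V → V → Prop) (W : Set V) (l r s : ℕ) (F : Set V) : Prop :=
  ∀ V1 V2 : Set V, V1 ⊆ W → V2 ⊆ W → V1.Nonempty → V2.Nonempty → Disjoint V1 V2 →
    ZSet E l F V1 r = V1 ∨ ZSet E l F V2 r = V2 ∨
      s ≤ (ZSet E l F V1 r).ncard + (ZSet E l F V2 r).ncard

/-- `G = (V,E)` is `(r,s)`-robust with `l` hops with respect to `F`. -/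
def RSRobust {V : Type*} (E : V → V → Prop) (l r s : ℕ) (F : Set V) : Prop :=
  RSRobustOn E Set.univ l r s F

/-- The edge relation of the subgraph of `E` induced by the vertex set `W`. -/
def induced {V : Type*} (E : V → V → Prop) (W : Set V) : V → V → Prop :=
  fun j i => E j i ∧ j ∈ W ∧ i ∈ W

/-- `G` is `r`-strictly robust with `l` hops with respect to `F`: the subgraph of `G`
induced by `V ∖ F` is `r`-robust (i.e. `(r,1)`-robust) with `l` hops with respect to `F`. -/
def StrictRobust {V : Type*} (E : V → V → Prop) (l r : ℕ) (F : Set V) : Prop :=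
  RSRobustOn (induced E Fᶜ) Fᶜ l r 1 F

/-- `F` is an `f`-total set: it contains at most `f` nodes. -/
def FTotal {V : Type*} (f : ℕ) (F : Set V) : Prop := F.ncard ≤ f

/-- `F` is `f`-local (in `l`-hop neighbors): every node outside `F` has at most `f`
nodes of `F` among the nodes from which it is reachable by a path of at most `l` hops. -/
def FLocal {V : Type*} (E : V → V → Prop) (l f : ℕ) (F : Set V) : Prop :=
  ∀ i, i ∉ F → {j ∈ F | ∃ p, IsHopPath E l j i p}.ncard ≤ f

lemma chain_rtg {V : Type*} {R : V → V → Prop} (p : List V) :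
    ∀ j i : V, p.Chain' R → p.head? = some j → p.getLast? = some i →
      Relation.ReflTransGen R j i := by
  induction p with
  | nil => intro j i _ hh _; simp at hh
  | cons a q ih =>
    intro j i hc hh hlast
    simp only [List.head?_cons, Option.some.injEq] at hh
    subst hh
    cases q with
    | nil =>
      simp only [List.getLast?_singleton, Option.some.injEq] at hlast
      subst hlast; exact Relation.ReflTransGen.refl
    | cons b q' =>
      have hr : R a b := (List.isChain_cons_cons.mp hc).1
      have ht : Relation.ReflTransGen R b i := by
        refine ih b i (List.isChain_cons_cons.mp hc).2 rfl ?_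
        simpa [List.getLast?_cons_cons] using hlast
      exact Relation.ReflTransGen.head hr ht

lemma chain'_and {V : Type*} {E : V → V → Prop} {Q : V → Prop} :
    ∀ p : List V, p.Chain' E → (∀ w ∈ p, Q w) →
      p.Chain' (fun a b => E a b ∧ Q a ∧ Q b)
  | [], _, _ => List.isChain_nil
  | [_], _, _ => List.isChain_singleton _
  | a :: b :: q, hc, hq => by
      unfold List.Chain' at hc ⊢
      rw [List.isChain_cons_cons] at hc ⊢
      exact ⟨⟨hc.1, hq a (by simp), hq b (by simp)⟩,
        chain'_and (b :: q) hc.2 (fun w hw => hq w (List.mem_cons_of_mem _ hw))⟩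

/-- an undirected `(r,s)`-robust graph (with `r,s ≥ 1`) is `r`-connected:
removing fewer than `r` vertices leaves the induced subgraph connected. -/
theorem robust_connectivity {V : Type*} [Fintype V] (E : V → V → Prop)
    (hsym : Symmetric E) (l r s : ℕ) (hl : 1 ≤ l) (hr : 1 ≤ r) (hs : 1 ≤ s)
    (F : Set V) (h : RSRobust E l r s F) :
    ∀ S : Set V, S.ncard < r → S ≠ Set.univ →
      ∀ u v : V, u ∉ S → v ∉ S → Relation.ReflTransGen (induced E Sᶜ) u v := by
  classical
  intro S hScard hSuniv u v hu hv
  by_contra hcon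
  set R := induced E Sᶜ with hR
  have hRsymm : Symmetric R := fun a b hab => ⟨hsym hab.1, hab.2.2, hab.2.1⟩
  have hRTsymm : Symmetric (Relation.ReflTransGen R) :=
    by haveI : Std.Symm R := ⟨hRsymm⟩; exact fun a b h => Std.Symm.symm a b h
  set V1 : Set V := {w | w ∉ S ∧ Relation.ReflTransGen R u w} with hV1
  set V2 : Set V := {w | w ∉ S ∧ ¬ Relation.ReflTransGen R u w} with hV2
  have hu1 : u ∈ V1 := ⟨hu, Relation.ReflTransGen.refl⟩
  have hv2 : v ∈ V2 := ⟨hv, hcon⟩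
  have hdisj : Disjoint V1 V2 := by
    rw [Set.disjoint_left]
    rintro w ⟨_, hw⟩ ⟨_, hw'⟩
    exact hw' hw
  -- key: no node satisfies MemZ for a component-like set T
  have key : ∀ T : Set V, (∀ w ∈ T, w ∉ S) →
      (∀ w₁ ∈ T, ∀ w₂, w₂ ∉ S → Relation.ReflTransGen R w₁ w₂ → w₂ ∈ T) →
      ∀ i, ¬ MemZ E l F T r i := by
    rintro T hTS hTcl i ⟨hiT, P, hP, _, hind⟩
    by_cases hall : ∀ a : Fin r, ∃ w ∈ P a, w ∈ S
    · choose f hf hfS using hall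
      have hinj : Function.Injective fun a : Fin r => (⟨f a, hfS a⟩ : S) := by
        intro a b hab
        by_contra hne
        have hab' : f a = f b := congrArg Subtype.val hab
        have : f a = i := hind a b hne (f a) (hf a) (by rw [hab']; exact hf b)
        exact hTS i hiT (this ▸ hfS a)
      have hle : r ≤ S.ncard := by
        calc r = Nat.card (Fin r) := by simp
          _ ≤ Nat.card S := Nat.card_le_card_of_injective _ hinj
          _ = S.ncard := Nat.card_coe_set_eq S
      omega
    · push_neg at hall
      obtain ⟨a, ha⟩ := hall
      obtain ⟨j, hjT, hnd, hch, hh, hlast, hlen, _⟩ := hP a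
      have hchR : (P a).Chain' R :=
        chain'_and (Q := fun w => w ∉ S) _ hch ha
      have hji : Relation.ReflTransGen R j i := chain_rtg _ _ _ hchR hh hlast
      have hjS : j ∉ S := ha j (List.mem_of_mem_head? (by simp [hh]))
      exact hjT (hTcl i hiT j hjS (hRTsymm hji))
  have hcl1 : ∀ w₁ ∈ V1, ∀ w₂, w₂ ∉ S → Relation.ReflTransGen R w₁ w₂ → w₂ ∈ V1 := by
    rintro w₁ ⟨_, hw₁⟩ w₂ hw₂S hrt
    exact ⟨hw₂S, hw₁.trans hrt⟩
  have hcl2 : ∀ w₁ ∈ V2, ∀ w₂, w₂ ∉ S → Relation.ReflTransGen R w₁ w₂ → w₂ ∈ V2 := by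
    rintro w₁ ⟨hw₁S, hw₁⟩ w₂ hw₂S hrt
    exact ⟨hw₂S, fun hu2 => hw₁ (hu2.trans (hRTsymm hrt))⟩
  rcases h V1 V2 (Set.subset_univ _) (Set.subset_univ _) ⟨u, hu1⟩ ⟨v, hv2⟩ hdisj with
    h1 | h2 | h3
  · refine key V1 (fun w hw => hw.1) hcl1 u ?_
    have := hu1; rw [← h1] at this; exact this
  · refine key V2 (fun w hw => hw.1) hcl2 v ?_
    have := hv2; rw [← h2] at this; exact this
  · have : (ZSet E l F V1 r).Nonempty ∨ (ZSet E l F V2 r).Nonempty := by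
      by_contra hne
      push_neg at hne
      rw [hne.1, hne.2] at h3
      simp at h3
      omega
    rcases this with ⟨i, hi⟩ | ⟨i, hi⟩
    · exact key V1 (fun w hw => hw.1) hcl1 i hi
    · exact key V2 (fun w hw => hw.1) hcl2 i hi
end

section
/- If a finite directed graph G = (V,E) with |V| = n ≥ 2 is (r,s)-robust with l hops with respect to a set F ⊆ V, where s ≥ 1, then r ≤ ⌈n/2⌉. -/
lemma memZ_r_le {V : Type*} [Fintype V] (E : V → V → Prop) (l : ℕ) (F S : Set V) (r : ℕ)
    (i : V) (h : MemZ E l F S r i) : r ≤ Sᶜ.ncard := by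
  classical
  obtain ⟨hi, P, hP, -, hind⟩ := h
  choose j hjS hjp using hP
  have hjmem : ∀ a, j a ∈ P a := by
    intro a
    obtain ⟨-, -, hh, -⟩ := hjp a
    cases hp : P a with
    | nil => simp [hp] at hh
    | cons x xs => rw [hp] at hh; simp at hh; simp [hp, hh]
  have hinj : Function.Injective (fun a : Fin r => (⟨j a, hjS a⟩ : ↥Sᶜ)) := by
    intro a b hab
    by_contra hne
    simp only [Subtype.mk.injEq] at hab
    have := hind a b hne (j a) (hjmem a) (hab ▸ hjmem b)
    exact hjS a (this ▸ hi)
  have := Fintype.card_le_of_injective _ hinj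
  rw [← Nat.card_coe_set_eq, Nat.card_eq_fintype_card]
  simpa only [Fintype.card_fin] using this

/-- if `G` with `n ≥ 2` vertices is `(r,s)`-robust with `l` hops
w.r.t. `F` (with `s ≥ 1`), then `r ≤ ⌈n/2⌉`. -/
theorem robust_upper_bound {V : Type*} [Fintype V] (E : V → V → Prop) (l r s : ℕ)
    (hl : 1 ≤ l) (hs : 1 ≤ s) (hn : 2 ≤ Fintype.card V) (F : Set V)
    (h : RSRobust E l r s F) :
    r ≤ (Fintype.card V + 1) / 2 := by
  classical
  obtain ⟨T, hT, hTcard⟩ := Finset.exists_subset_card_eq (s := (Finset.univ : Finset V))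
    (n := Fintype.card V / 2) (by simp; omega)
  set V1 : Set V := ↑T with hV1
  set V2 : Set V := ↑Tᶜ with hV2
  have hV1c : V1ᶜ.ncard = Fintype.card V - Fintype.card V / 2 := by
    have : V1ᶜ = (↑Tᶜ : Set V) := by simp [hV1]
    rw [this, Set.ncard_coe_finset, Finset.card_compl, hTcard]
  have hV2c : V2ᶜ.ncard = Fintype.card V / 2 := by
    have : V2ᶜ = (↑T : Set V) := by simp [hV2]
    rw [this, Set.ncard_coe_finset, hTcard]
  have hV1ne : V1.Nonempty := by
    simp only [hV1, Finset.coe_nonempty, ← Finset.card_pos, hTcard]; omega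
  have hV2ne : V2.Nonempty := by
    simp only [hV2, Finset.coe_nonempty, ← Finset.card_pos, Finset.card_compl, hTcard]
    omega
  have hdisj : Disjoint V1 V2 := by
    rw [hV1, hV2, Finset.disjoint_coe]
    exact disjoint_compl_right
  rcases h V1 V2 (Set.subset_univ _) (Set.subset_univ _) hV1ne hV2ne hdisj with h1 | h2 | h3
  · obtain ⟨i, hi⟩ := hV1ne
    rw [← h1] at hi
    have := memZ_r_le E l F V1 r i hi
    omega
  · obtain ⟨i, hi⟩ := hV2ne
    rw [← h2] at hi
    have := memZ_r_le E l F V2 r i hi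
    omega
  · rcases Nat.lt_or_ge 0 (ZSet E l F V1 r).ncard with hz | hz
    · obtain ⟨i, hi⟩ := (Set.ncard_pos (Set.toFinite _)).mp hz
      have := memZ_r_le E l F V1 r i hi
      omega
    · have hz2 : 0 < (ZSet E l F V2 r).ncard := by omega
      obtain ⟨i, hi⟩ := (Set.ncard_pos (Set.toFinite _)).mp hz2
      have := memZ_r_le E l F V2 r i hi
      omega
end

section
/- If a finite directed graph G = (V,E) is (r+s−1)-robust with l hops with respect to a set F ⊆ V, where r ≥ 1 and s ≥ 1, then G is (r,s)-robust with l hops with respect to F. -/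
open Classical in
/-- Key lemma: if `i` has `r + m` independent paths from outside `S \ Z`, and
`Z ⊆ S` with `Z.ncard ≤ m`, then `i` has `r` independent paths from outside `S`. -/
lemma memZ_of_memZ_diff {V : Type*} [Fintype V] (E : V → V → Prop) (l r m : ℕ)
    (F S Z : Set V) (hZm : Z.ncard ≤ m) (hZS : Z ⊆ S) (i : V)
    (hi : MemZ E l F (S \ Z) (r + m) i) : MemZ E l F S r i := by
  obtain ⟨hiS, P, hP1, hPF, hPind⟩ := hi
  choose j hj hjp using hP1
  have hjmem : ∀ a, j a ∈ P a := by
    intro a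
    have := (hjp a).2.2.1
    exact List.mem_of_mem_head? (by rw [this]; rfl)
  have hiZ : i ∉ Z := hiS.2
  -- the set of indices whose source lies in Z
  let A : Finset (Fin (r + m)) := Finset.univ.filter (fun a => j a ∈ Z)
  have hAcard : A.card ≤ m := by
    have hinj : Set.InjOn j (A : Set (Fin (r + m))) := by
      intro a ha b hb hab
      by_contra hne
      have := hPind a b hne (j a) (hjmem a) (hab ▸ hjmem b)
      simp only [A, Finset.coe_filter, Set.mem_setOf_eq] at ha
      exact hiZ (this ▸ ha.2)
    have h1 : (A : Set (Fin (r + m))).ncard ≤ Z.ncard := by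
      apply Set.ncard_le_ncard_of_injOn j _ hinj (Set.toFinite Z)
      intro a ha
      simp only [A, Finset.coe_filter, Set.mem_setOf_eq] at ha
      exact ha.2
    rw [Set.ncard_coe_finset] at h1
    omega
  have hAc : r ≤ Aᶜ.card := by
    have := Finset.card_compl A
    simp only [Fintype.card_fin] at this
    omega
  obtain ⟨B, hBA, hBcard⟩ := Finset.exists_subset_card_eq hAc
  refine ⟨hiS.1, fun k => P (B.equivFin.symm (Fin.cast hBcard.symm k)), ?_, ?_, ?_⟩
  · intro k
    set a : Fin (r + m) := (B.equivFin.symm (Fin.cast hBcard.symm k) : Fin (r + m))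
    refine ⟨j a, ?_, hjp a⟩
    intro hjS
    have haB : a ∈ B := (B.equivFin.symm (Fin.cast hBcard.symm k)).2
    have haA : a ∉ A := by
      have := hBA haB; simpa using this
    have : j a ∉ Z := by
      intro hz; exact haA (Finset.mem_filter.mpr ⟨Finset.mem_univ _, hz⟩)
    exact hj a ⟨hjS, this⟩
  · intro k v hv; exact hPF _ v hv
  · intro a b hab v hva hvb
    refine hPind _ _ ?_ v hva hvb
    intro heq
    apply hab
    have := B.equivFin.symm.injective (Subtype.ext heq)
    exact Fin.cast_injective _ this

/-- if `G` is `(r+s-1)`-robust with `l` hops w.r.t. `F` (with `r,s ≥ 1`),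
then `G` is `(r,s)`-robust with `l` hops w.r.t. `F`. -/
theorem robust_of_r_plus_s {V : Type*} [Fintype V] (E : V → V → Prop) (l r s : ℕ)
    (hl : 1 ≤ l) (hr : 1 ≤ r) (hs : 1 ≤ s) (F : Set V)
    (h : RSRobust E l (r + s - 1) 1 F) :
    RSRobust E l r s F := by
  intro V1 V2 _ _ h1 h2 hd
  by_cases e1 : ZSet E l F V1 r = V1
  · exact Or.inl e1
  by_cases e2 : ZSet E l F V2 r = V2
  · exact Or.inr (Or.inl e2)
  refine Or.inr (Or.inr ?_)
  by_contra hcon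
  push_neg at hcon
  set Z1 := ZSet E l F V1 r with hZ1def
  set Z2 := ZSet E l F V2 r with hZ2def
  have hZ1S : Z1 ⊆ V1 := fun i hi => hi.1
  have hZ2S : Z2 ⊆ V2 := fun i hi => hi.1
  have hV1' : (V1 \ Z1).Nonempty := by
    rw [Set.diff_nonempty]
    intro hsub; exact e1 (Set.Subset.antisymm hZ1S hsub)
  have hV2' : (V2 \ Z2).Nonempty := by
    rw [Set.diff_nonempty]
    intro hsub; exact e2 (Set.Subset.antisymm hZ2S hsub)
  have hdisj : Disjoint (V1 \ Z1) (V2 \ Z2) :=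
    hd.mono Set.diff_subset Set.diff_subset
  have hkey1 : ∀ i, i ∈ ZSet E l F (V1 \ Z1) (r + s - 1) → False := by
    intro i hi
    have hm : Z1.ncard ≤ s - 1 := by omega
    have hrw : r + s - 1 = r + (s - 1) := by omega
    rw [hrw] at hi
    have : i ∈ Z1 := memZ_of_memZ_diff E l r (s - 1) F V1 Z1 hm hZ1S i hi
    exact hi.1.2 this
  have hkey2 : ∀ i, i ∈ ZSet E l F (V2 \ Z2) (r + s - 1) → False := by
    intro i hi
    have hm : Z2.ncard ≤ s - 1 := by omega
    have hrw : r + s - 1 = r + (s - 1) := by omega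
    rw [hrw] at hi
    have : i ∈ Z2 := memZ_of_memZ_diff E l r (s - 1) F V2 Z2 hm hZ2S i hi
    exact hi.1.2 this
  rcases h (V1 \ Z1) (V2 \ Z2) (Set.subset_univ _) (Set.subset_univ _) hV1' hV2' hdisj with
    hA | hA | hA
  · obtain ⟨i, hi⟩ := hV1'
    exact hkey1 i (by rw [hA]; exact hi)
  · obtain ⟨i, hi⟩ := hV2'
    exact hkey2 i (by rw [hA]; exact hi)
  · by_cases hc : (ZSet E l F (V1 \ Z1) (r + s - 1)).ncard = 0
    · have hc2 : (ZSet E l F (V2 \ Z2) (r + s - 1)).ncard ≠ 0 := by omega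
      obtain ⟨i, hi⟩ := Set.nonempty_of_ncard_ne_zero hc2
      exact hkey2 i hi
    · obtain ⟨i, hi⟩ := Set.nonempty_of_ncard_ne_zero hc
      exact hkey1 i hi
end

section
/- Let G = (V,E) be a finite directed graph, let f ≥ 0 and l ≥ 1 be integers. If G is (2f+1)-robust with l hops under the f-local model, then G is (f+1)-strictly robust with l hops under the f-local model. -/
lemma path_decomp {V : Type*} {E : V → V → Prop} {l : ℕ} {j i : V} {p : List V}
    (h : IsHopPath E l j i p) : p = j :: (interm p ++ [i]) := by
  obtain ⟨hn, hc, hh, hlast, h2, _⟩ := h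
  match p, h2 with
  | a :: b :: q, _ =>
    simp only [List.head?_cons, Option.some.injEq] at hh
    subst hh
    have hne : (b :: q) ≠ [] := List.cons_ne_nil _ _
    have : (a :: b :: q).getLast (by simp) = i := by
      rw [List.getLast?_eq_getLast (List.cons_ne_nil _ _)] at hlast
      exact Option.some.injEq _ _ ▸ hlast.symm ▸ rfl
    rw [List.getLast_cons hne] at this
    show a :: b :: q = a :: ((b :: q).dropLast ++ [i])
    rw [← this, List.dropLast_append_getLast hne]

lemma mem_path_iff {V : Type*} {E : V → V → Prop} {l : ℕ} {j i : V} {p : List V}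
    (h : IsHopPath E l j i p) : ∀ v ∈ p, v = j ∨ v ∈ interm p ∨ v = i := by
  intro v hv
  rw [path_decomp h] at hv
  simp at hv
  tauto

lemma src_mem {V : Type*} {E : V → V → Prop} {l : ℕ} {j i : V} {p : List V}
    (h : IsHopPath E l j i p) : j ∈ p := by
  rw [path_decomp h]; simp

lemma src_ne_dst {V : Type*} {E : V → V → Prop} {l : ℕ} {j i : V} {p : List V}
    (h : IsHopPath E l j i p) : j ≠ i := by
  have hn := h.1
  rw [path_decomp h] at hn
  simp [List.nodup_cons] at hn
  exact fun hji => hn.1.2 hji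

lemma hoppath_induced {V : Type*} {E : V → V → Prop} {F : Set V} {l : ℕ} {j i : V} {p : List V}
    (h : IsHopPath E l j i p) (hmem : ∀ v ∈ p, v ∉ F) :
    IsHopPath (induced E Fᶜ) l j i p := by
  obtain ⟨hn, hc, hh, hlast, h2, hlen⟩ := h
  refine ⟨hn, ?_, hh, hlast, h2, hlen⟩
  rw [List.Chain', List.isChain_iff_getElem] at hc ⊢
  intro k hk
  exact ⟨hc k hk, hmem _ (List.getElem_mem _), hmem _ (List.getElem_mem _)⟩

lemma memZ_induced {V : Type*} [Fintype V] {E : V → V → Prop} {F S : Set V} {l f : ℕ} {i : V}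
    (hF : FLocal E l f F) (hS : S ⊆ Fᶜ)
    (hi : MemZ E l F S (2 * f + 1) i) : MemZ (induced E Fᶜ) l F S (f + 1) i := by
  classical
  obtain ⟨hiS, P, hsrc, hint, hind⟩ := hi
  have hiF : i ∉ F := hS hiS
  choose j hjS hjp using hsrc
  set bad : Finset (Fin (2 * f + 1)) := Finset.univ.filter (fun a => j a ∈ F) with hbad
  have hfin : {x ∈ F | ∃ p, IsHopPath E l x i p}.Finite := Set.toFinite _
  have hjne : ∀ a b : Fin (2 * f + 1), a ≠ b → j a ≠ j b := by
    intro a b hab heq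
    exact src_ne_dst (hjp a) (hind a b hab (j a) (src_mem (hjp a)) (heq ▸ src_mem (hjp b)))
  have hbadcard : bad.card ≤ f := by
    have hle : bad.card ≤ hfin.toFinset.card := by
      apply Finset.card_le_card_of_injOn (fun a => j a)
      · intro a ha
        simp only [hbad, Finset.mem_filter] at ha
        simp only [Set.Finite.mem_toFinset, Set.mem_setOf_eq]
        exact hfin.mem_toFinset.mpr ⟨(Finset.mem_filter.mp ha).2, _, hjp a⟩
      · intro a _ b _ heq
        by_contra hab
        exact hjne a b hab heq
    calc bad.card ≤ hfin.toFinset.card := hle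
      _ = {x ∈ F | ∃ p, IsHopPath E l x i p}.ncard := (Set.ncard_eq_toFinset_card _ hfin).symm
      _ ≤ f := hF i hiF
  have hgood : f + 1 ≤ (Finset.univ.filter (fun a => j a ∉ F)).card := by
    have := Finset.card_filter_add_card_filter_not
      (s := (Finset.univ : Finset (Fin (2 * f + 1)))) (p := fun a => j a ∈ F)
    simp only [Finset.card_univ, Fintype.card_fin] at this
    rw [← hbad] at this
    omega
  obtain ⟨t, htsub, htcard⟩ := Finset.exists_subset_card_eq hgood
  set e := t.orderIsoOfFin htcard with he
  refine ⟨hiS, fun a => P (e a), ?_, ?_, ?_⟩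
  · intro a
    refine ⟨j (e a), hjS _, hoppath_induced (hjp _) ?_⟩
    intro v hv
    rcases mem_path_iff (hjp (e a)) v hv with h1 | h2 | h3
    · subst h1
      have := htsub (e a).2
      simp only [Finset.mem_filter] at this
      exact this.2
    · exact hint _ v h2
    · exact h3 ▸ hiF
  · intro a v hv; exact hint _ v hv
  · intro a b hab v hva hvb
    refine hind _ _ ?_ v hva hvb
    intro heq
    exact hab (e.injective (Subtype.ext heq))

/-- if `G` is `(2f+1)`-robust with `l` hops under the `f`-local model,
then `G` is `(f+1)`-strictly robust with `l` hops under the `f`-local model. -/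
theorem strict_of_robust {V : Type*} [Fintype V] (E : V → V → Prop) (f l : ℕ)
    (hl : 1 ≤ l)
    (h : ∀ F : Set V, FLocal E l f F → RSRobust E l (2 * f + 1) 1 F) :
    ∀ F : Set V, FLocal E l f F → StrictRobust E l (f + 1) F := by
  intro F hF V1 V2 h1 h2 hn1 hn2 hd
  right; right
  have key : ∀ S : Set V, S ⊆ Fᶜ → ∀ i, i ∈ ZSet E l F S (2 * f + 1) →
      1 ≤ (ZSet (induced E Fᶜ) l F S (f + 1)).ncard := by
    intro S hS i hi
    have hmem : i ∈ ZSet (induced E Fᶜ) l F S (f + 1) := memZ_induced hF hS hi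
    have := (Set.ncard_pos (Set.toFinite _)).mpr ⟨i, hmem⟩
    omega
  rcases h F hF V1 V2 (by simp) (by simp) hn1 hn2 hd with hz | hz | hz
  · obtain ⟨i, hi⟩ := hn1
    have := key V1 h1 i (by rw [hz]; exact hi)
    omega
  · obtain ⟨i, hi⟩ := hn2
    have := key V2 h2 i (by rw [hz]; exact hi)
    omega
  · have hcase : (ZSet E l F V1 (2 * f + 1)).ncard ≠ 0 ∨
        (ZSet E l F V2 (2 * f + 1)).ncard ≠ 0 := by omega
    rcases hcase with hc | hc
    · obtain ⟨i, hi⟩ := Set.nonempty_of_ncard_ne_zero hc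
      have := key V1 h1 i hi
      omega
    · obtain ⟨i, hi⟩ := Set.nonempty_of_ncard_ne_zero hc
      have := key V2 h2 i hi
      omega
end

section
/- There exists a finite directed graph G = (V,E) that is (2,2)-robust with 1 hop under the 1-local model but is not 2-strictly robust with 1 hop under the 1-local model. (Hence condition (C) of Proposition 5 with f = 1, l = 1 does not imply condition (B).) -/
/-! ### Auxiliary lemmas for the proof -/

lemma hop1_eq {V : Type*} {E : V → V → Prop} {j i : V} {p : List V}
    (h : IsHopPath E 1 j i p) : p = [j, i] ∧ j ≠ i ∧ E j i := by
  obtain ⟨hnd, hch, hh, hl, h2, h2'⟩ := h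
  have hlen : p.length = 2 := le_antisymm h2' h2
  obtain ⟨x, y, rfl⟩ := List.length_eq_two.mp hlen
  simp only [List.head?_cons, Option.some.injEq] at hh
  have hl' : y = i := by
    simpa using hl
  subst hh; subst hl'
  simp only [List.nodup_cons, List.mem_singleton, List.nodup_nil, and_true,
    not_or] at hnd
  refine ⟨rfl, ?_, ?_⟩
  · simpa using hnd
  · simpa [List.Chain', List.isChain_cons_cons] using hch

lemma memZ2_iff {V : Type*} (E : V → V → Prop) (F S : Set V) (i : V) :
    MemZ E 1 F S 2 i ↔ i ∈ S ∧ ∃ j1 j2 : V, j1 ≠ j2 ∧ j1 ∉ S ∧ j2 ∉ S ∧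
      j1 ≠ i ∧ j2 ≠ i ∧ E j1 i ∧ E j2 i := by
  constructor
  · rintro ⟨hiS, P, hpath, -, hind⟩
    obtain ⟨j1, hj1S, hp1⟩ := hpath 0
    obtain ⟨j2, hj2S, hp2⟩ := hpath 1
    obtain ⟨he1, hne1, hE1⟩ := hop1_eq hp1
    obtain ⟨he2, hne2, hE2⟩ := hop1_eq hp2
    refine ⟨hiS, j1, j2, ?_, hj1S, hj2S, hne1, hne2, hE1, hE2⟩
    intro h
    apply hne1
    apply hind 0 1 (by decide) j1
    · rw [he1]; simp
    · rw [he2, h]; simp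
  · rintro ⟨hiS, j1, j2, hne, hj1S, hj2S, hne1, hne2, hE1, hE2⟩
    refine ⟨hiS, ![[j1, i], [j2, i]], ?_, ?_, ?_⟩
    · intro a
      fin_cases a
      · exact ⟨j1, hj1S, by simp [IsHopPath, hne1, hE1, List.Chain']⟩
      · exact ⟨j2, hj2S, by simp [IsHopPath, hne2, hE2, List.Chain']⟩
    · intro a v hv
      fin_cases a <;> simp [interm] at hv
    · have k : ∀ x y : V, x ≠ y → ∀ w, w ∈ [x, i] → w ∈ [y, i] → w = i := by
        intro x y hxy w h1 h2
        simp only [List.mem_cons, List.mem_singleton, List.not_mem_nil,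
          or_false] at h1 h2
        rcases h1 with h1 | h1
        · rcases h2 with h2 | h2
          · exact absurd (h1.symm.trans h2) hxy
          · exact h2
        · exact h1
      intro a b hab v hva hvb
      fin_cases a <;> fin_cases b <;>
        simp only [Matrix.cons_val_zero, Matrix.cons_val_one, Matrix.head_cons,
          Fin.mk_zero, Fin.mk_one] at hva hvb <;>
        first
          | exact absurd rfl hab
          | exact k j1 j2 hne v hva hvb
          | exact k j2 j1 hne.symm v hva hvb

/-- In-neighbor lists of the counterexample graph on 5 vertices. -/
def ins : Fin 5 → List (Fin 5) := ![[1,2,3,4], [0,2], [0,1], [0,1,2,4], [0,1,2,3]]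

/-- Edge relation of the counterexample graph. -/
def Edg (j i : Fin 5) : Prop := j ∈ ins i

instance : ∀ j i, Decidable (Edg j i) := fun j i =>
  inferInstanceAs (Decidable (j ∈ ins i))

/-- Finset version of the `Z`-membership condition (for `l = 1`, `r = 2`). -/
def zcond (s : Finset (Fin 5)) (i : Fin 5) : Prop :=
  ∃ j1 j2 : Fin 5, j1 ≠ j2 ∧ j1 ∉ s ∧ j2 ∉ s ∧ j1 ≠ i ∧ j2 ≠ i ∧ Edg j1 i ∧ Edg j2 i

instance : ∀ s i, Decidable (zcond s i) := fun s i =>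
  inferInstanceAs (Decidable (∃ _ _, _ ∧ _ ∧ _ ∧ _ ∧ _ ∧ _ ∧ _))

/-- Finset version of `ZSet`. -/
def zfin (s : Finset (Fin 5)) : Finset (Fin 5) := s.filter (zcond s)

lemma zset_eq (F : Set (Fin 5)) (s : Finset (Fin 5)) :
    ZSet Edg 1 F (↑s) 2 = ↑(zfin s) := by
  ext i
  simp [ZSet, memZ2_iff, zfin, zcond, Finset.mem_filter]

lemma key : ∀ s1 s2 : Finset (Fin 5), s1.Nonempty → s2.Nonempty → Disjoint s1 s2 →
    zfin s1 = s1 ∨ zfin s2 = s2 ∨ 2 ≤ (zfin s1).card + (zfin s2).card := by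
  decide

lemma edg_to_one : ∀ j, Edg j 1 → j = 0 ∨ j = 2 := by decide
lemma edg_to_two : ∀ j, Edg j 2 → j = 0 ∨ j = 1 := by decide

lemma zset_induced_empty (a b : Fin 5)
    (hab : ∀ j, Edg j a → j = 0 ∨ j = b) :
    ZSet (induced Edg ({0}ᶜ : Set (Fin 5))) 1 {0} {a} 2 = ∅ := by
  ext i
  simp only [Set.mem_empty_iff_false, iff_false]
  intro h
  rw [ZSet, Set.mem_setOf_eq, memZ2_iff] at h
  obtain ⟨hi, j1, j2, hne, -, -, -, -, he1, he2⟩ := h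
  rw [Set.mem_singleton_iff] at hi
  subst hi
  obtain ⟨hE1, hj1, -⟩ := he1
  obtain ⟨hE2, hj2, -⟩ := he2
  simp only [Set.mem_compl_iff, Set.mem_singleton_iff] at hj1 hj2
  have h1 := (hab j1 hE1).resolve_left hj1
  have h2 := (hab j2 hE2).resolve_left hj2
  exact hne (h1.trans h2.symm)

/-- there is a finite digraph that is `(2,2)`-robust with 1 hop under
the 1-local model but not 2-strictly robust with 1 hop under the 1-local model. -/
theorem exists_CC_not_B : ∃ (n : ℕ) (E : Fin n → Fin n → Prop),
    (∀ F : Set (Fin n), FLocal E 1 1 F → RSRobust E 1 2 2 F) ∧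
    ¬ (∀ F : Set (Fin n), FLocal E 1 1 F → StrictRobust E 1 2 F) := by
  refine ⟨5, Edg, ?_, ?_⟩
  · -- (2,2)-robustness (F is irrelevant when l = 1)
    intro F _ V1 V2 _ _ h1 h2 hdis
    classical
    have e1 : V1 = ↑V1.toFinset := (Set.coe_toFinset V1).symm
    have e2 : V2 = ↑V2.toFinset := (Set.coe_toFinset V2).symm
    rw [e1, e2, zset_eq, zset_eq, Set.ncard_coe_finset, Set.ncard_coe_finset,
      Finset.coe_inj, Finset.coe_inj]
    exact key _ _ (Set.toFinset_nonempty.mpr h1) (Set.toFinset_nonempty.mpr h2)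
      (by rwa [Set.disjoint_toFinset])
  · -- not 2-strictly robust: take F = {0}
    intro H
    have hloc : FLocal Edg 1 1 ({0} : Set (Fin 5)) := by
      intro i _
      calc ({j ∈ ({0} : Set (Fin 5)) | ∃ p, IsHopPath Edg 1 j i p}).ncard
          ≤ ({0} : Set (Fin 5)).ncard :=
            Set.ncard_le_ncard (Set.sep_subset _ _) (Set.toFinite _)
        _ = 1 := Set.ncard_singleton _
    have hz1 := zset_induced_empty 1 2 edg_to_one
    have hz2 := zset_induced_empty 2 1 edg_to_two
    have := H ({0} : Set (Fin 5)) hloc ({1} : Set (Fin 5)) ({2} : Set (Fin 5))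
      (by intro x hx; simp_all)
      (by intro x hx; simp_all)
      (Set.singleton_nonempty _) (Set.singleton_nonempty _)
      (by simp [Set.disjoint_singleton_left])
    rcases this with h | h | h
    · rw [hz1] at h; exact (Set.singleton_nonempty (1 : Fin 5)).ne_empty h.symm
    · rw [hz2] at h; exact (Set.singleton_nonempty (2 : Fin 5)).ne_empty h.symm
    · rw [hz1, hz2] at h; simp at h
end

section
/- There exists a finite directed graph G = (V,E) that is 2-strictly robust with 1 hop under the 1-local model but is not 3-robust with 1 hop (i.e., not (3,1)-robust with 1 hop with respect to F = ∅). (Hence condition (B) of Proposition 5 with f = 1, l = 1 does not imply condition (A).) -/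
lemma hoppath_one {V : Type*} (E : V → V → Prop) (j i : V) (p : List V) :
    IsHopPath E 1 j i p ↔ p = [j, i] ∧ E j i ∧ j ≠ i := by
  constructor
  · rintro ⟨hnd, hch, hh, hl, h2, h3⟩
    have hlen : p.length = 2 := le_antisymm h3 h2
    obtain ⟨a, b, rfl⟩ := List.length_eq_two.mp hlen
    simp only [List.head?_cons, Option.some.injEq] at hh
    have hl' : b = i := by simpa using hl
    subst hh hl'
    replace hch : E a b := List.isChain_pair.mp hch
    simp only [List.nodup_cons, List.mem_singleton, List.nodup_nil, and_true] at hnd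
    exact ⟨rfl, hch, hnd.1⟩
  · rintro ⟨rfl, he, hne⟩
    exact ⟨by simp [hne], List.isChain_pair.mpr he, rfl, rfl, by simp, by simp⟩

lemma memZ_one {V : Type*} (E : V → V → Prop) (F S : Set V) (r : ℕ) (i : V) :
    MemZ E 1 F S r i ↔ i ∈ S ∧ ∃ J : Fin r → V, Function.Injective J ∧
      ∀ a, J a ∉ S ∧ E (J a) i ∧ J a ≠ i := by
  constructor
  · rintro ⟨hi, P, h1, _, h3⟩
    choose j hjS hjp using h1
    have hP : ∀ a, P a = [j a, i] ∧ E (j a) i ∧ j a ≠ i :=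
      fun a => (hoppath_one E (j a) i (P a)).1 (hjp a)
    refine ⟨hi, j, ?_, fun a => ⟨hjS a, (hP a).2.1, (hP a).2.2⟩⟩
    intro a b hab
    by_contra hne
    have hma : j a ∈ P a := by rw [(hP a).1]; simp
    have hmb : j a ∈ P b := by rw [(hP b).1, ← hab]; simp
    exact (hP a).2.2 (h3 a b hne (j a) hma hmb)
  · rintro ⟨hi, J, hinj, hJ⟩
    refine ⟨hi, fun a => [J a, i], fun a =>
      ⟨J a, (hJ a).1, (hoppath_one E (J a) i _).2 ⟨rfl, (hJ a).2.1, (hJ a).2.2⟩⟩,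
      ?_, ?_⟩
    · intro a v hv; simp [interm] at hv
    · intro a b hab v hva hvb
      simp only [List.mem_cons, List.mem_singleton, List.not_mem_nil, or_false] at hva hvb
      rcases hva with rfl | rfl
      · rcases hvb with h | rfl
        · exact absurd (hinj h) hab
        · rfl
      · rfl

def Efun : Fin 4 → Fin 4 → Prop := fun j i => j ≠ i

lemma fin4_cases (j : Fin 4) : j = 0 ∨ j = 1 ∨ j = 2 ∨ j = 3 := by fin_cases j <;> decide

lemma Z3_empty (S : Set (Fin 4)) (x y : Fin 4) (hout : ∀ j, j ∉ S → j = x ∨ j = y) :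
    ZSet Efun 1 ∅ S 3 = ∅ := by
  ext i
  simp only [ZSet, Set.mem_setOf_eq, Set.mem_empty_iff_false, iff_false]
  rw [memZ_one]
  rintro ⟨hi, J, hinj, hJ⟩
  have hr : ∀ a, J a = x ∨ J a = y := fun a => hout (J a) (hJ a).1
  have e01 : J 0 ≠ J 1 := fun h => absurd (hinj h) (by decide)
  have e02 : J 0 ≠ J 2 := fun h => absurd (hinj h) (by decide)
  have e12 : J 1 ≠ J 2 := fun h => absurd (hinj h) (by decide)
  rcases hr 0 with h0 | h0 <;> rcases hr 1 with h1 | h1 <;> rcases hr 2 with h2 | h2 <;>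
    simp_all

lemma pos_part (F : Set (Fin 4)) (hF : FLocal Efun 1 1 F) : StrictRobust Efun 1 2 F := by
  intro V1 V2 h1 h2 hn1 hn2 hd
  -- If Fᶜ is empty this is vacuous
  rcases Set.eq_empty_or_nonempty Fᶜ with hFc | ⟨i0, hi0⟩
  · exact absurd (hFc ▸ h1 hn1.some_mem) (Set.notMem_empty _)
  · have hi0' : i0 ∉ F := hi0
    -- F has at most one element
    have hFsub : F ⊆ {j ∈ F | ∃ p, IsHopPath Efun 1 j i0 p} := by
      intro j hj
      refine ⟨hj, [j, i0], (hoppath_one Efun j i0 _).2 ⟨rfl, ?_, ?_⟩⟩ <;>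
        exact fun h => hi0' (h ▸ hj)
    have hF1 : F.ncard ≤ 1 :=
      le_trans (Set.ncard_le_ncard hFsub (Set.toFinite _)) (hF i0 hi0')
    have hcard : F.ncard + Fᶜ.ncard = 4 := by
      rw [Set.ncard_add_ncard_compl F]; simp [Nat.card_eq_fintype_card]
    have hFc3 : 3 ≤ Fᶜ.ncard := by omega
    -- key claim
    have claim : ∀ S : Set (Fin 4), S ⊆ Fᶜ → 2 ≤ (Fᶜ \ S).ncard →
        ZSet (induced Efun Fᶜ) 1 F S 2 = S := by
      intro S hS hc
      ext i
      simp only [ZSet, Set.mem_setOf_eq]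
      constructor
      · exact fun h => h.1
      · intro hiS
        rw [memZ_one]
        obtain ⟨a, b, ha, hb, hab⟩ := (Set.one_lt_ncard_iff (Set.toFinite _)).mp hc
        refine ⟨hiS, fun t => if t = 0 then a else b, ?_, ?_⟩
        · intro s t h
          fin_cases s <;> fin_cases t <;> simp_all
        · intro t
          by_cases ht : t = 0 <;> simp only [ht, if_true, if_false, reduceIte] <;>
          · first
            | exact ⟨ha.2, ⟨fun h => ha.2 (h ▸ hiS), ha.1, hS hiS⟩, fun h => ha.2 (h ▸ hiS)⟩
            | exact ⟨hb.2, ⟨fun h => hb.2 (h ▸ hiS), hb.1, hS hiS⟩, fun h => hb.2 (h ▸ hiS)⟩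
    -- counting
    have c1 : (Fᶜ \ V1).ncard + V1.ncard = Fᶜ.ncard :=
      Set.ncard_diff_add_ncard_of_subset h1 (Set.toFinite _)
    have hV1sub : V1 ⊆ Fᶜ \ V2 := fun v hv => ⟨h1 hv, fun h => (Set.disjoint_left.mp hd hv) h⟩
    have c2 : V1.ncard ≤ (Fᶜ \ V2).ncard := Set.ncard_le_ncard hV1sub (Set.toFinite _)
    by_cases hc1 : 2 ≤ (Fᶜ \ V1).ncard
    · exact Or.inl (claim V1 h1 hc1)
    · refine Or.inr (Or.inl (claim V2 h2 ?_))
      omega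

/-- there is a finite digraph that is 2-strictly robust with 1 hop under
the 1-local model but not 3-robust with 1 hop (w.r.t. `F = ∅`). -/
theorem exists_B_not_A : ∃ (n : ℕ) (E : Fin n → Fin n → Prop),
    (∀ F : Set (Fin n), FLocal E 1 1 F → StrictRobust E 1 2 F) ∧
    ¬ RSRobust E 1 3 1 (∅ : Set (Fin n)) := by

  refine ⟨4, Efun, pos_part, ?_⟩
  intro h
  have hd : Disjoint ({0, 1} : Set (Fin 4)) {2, 3} := by
    rw [Set.disjoint_left]
    rintro a (rfl | rfl) (h | h) <;> simp_all
  have hz1 : ZSet Efun 1 ∅ {0, 1} 3 = ∅ := by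
    apply Z3_empty _ 2 3
    intro j hj
    simp only [Set.mem_insert_iff, Set.mem_singleton_iff, not_or] at hj
    rcases fin4_cases j with rfl | rfl | rfl | rfl <;> tauto
  have hz2 : ZSet Efun 1 ∅ {2, 3} 3 = ∅ := by
    apply Z3_empty _ 0 1
    intro j hj
    simp only [Set.mem_insert_iff, Set.mem_singleton_iff, not_or] at hj
    rcases fin4_cases j with rfl | rfl | rfl | rfl <;> tauto
  rcases h {0, 1} {2, 3} (Set.subset_univ _) (Set.subset_univ _)
      ⟨0, by simp⟩ ⟨2, by simp⟩ hd with hc | hc | hc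
  · rw [hz1] at hc
    exact absurd (hc ▸ (by simp : (0 : Fin 4) ∈ ({0,1} : Set (Fin 4)))) (Set.notMem_empty _)
  · rw [hz2] at hc
    exact absurd (hc ▸ (by simp : (2 : Fin 4) ∈ ({2,3} : Set (Fin 4)))) (Set.notMem_empty _)
  · rw [hz1, hz2] at hc
    simp at hc
end

section
/- Let G = (V,E) be a finite directed graph with |V| = n, and let f ≥ 1 and l ≥ 1 be integers with n ≥ f+2. If G is (f+1)-strictly robust with l hops under the f-total model, then n ≥ 3f+1. -/

private lemma no_memZ_aux {V : Type*} (E : V → V → Prop) (l f : ℕ) (F : Set V)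
    (S : Set V) (T : Finset V) (hT : ∀ j, j ∈ Fᶜ → j ∉ S → j ∈ T)
    (hTcard : T.card ≤ f) (i : V)
    (hi : MemZ (induced E Fᶜ) l F S (f + 1) i) : False := by
  obtain ⟨hiS, P, hP1, _, hP3⟩ := hi
  choose j hjS hjpath using hP1
  have hmem : ∀ a, j a ∈ P a := by
    intro a
    exact List.mem_of_mem_head? (Option.mem_def.mpr (hjpath a).2.2.1)
  have hjC : ∀ a, j a ∈ (Fᶜ : Set V) := by
    intro a
    obtain ⟨hnd, hch, hhd, hlast, hlen, _⟩ := hjpath a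
    match hp : P a with
    | [] => simp [hp] at hlen
    | [x] => simp [hp] at hlen
    | x :: y :: rest =>
      rw [hp] at hhd hch
      have hx : j a = x := by simpa using hhd.symm
      have := (List.isChain_cons_cons.mp hch).1
      rw [hx]
      exact this.2.1
  have hinj : Function.Injective j := by
    intro a b hab
    by_contra hne
    have h2 : j a ∈ P b := by rw [hab]; exact hmem b
    have := hP3 a b hne _ (hmem a) h2
    exact hjS a (this ▸ hiS)
  have hle : (Finset.univ : Finset (Fin (f + 1))).card ≤ T.card :=
    Finset.card_le_card_of_injOn j (fun a _ => hT _ (hjC a) (hjS a)) hinj.injOn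
  simp at hle
  omega

/-- if `G` with `n ≥ f+2` vertices (`f ≥ 1`) is `(f+1)`-strictly robust
with `l` hops under the `f`-total model, then `n ≥ 3f+1`. -/
theorem strict_robust_card_bound {V : Type*} [Fintype V] (E : V → V → Prop)
    (f l : ℕ) (hf : 1 ≤ f) (hl : 1 ≤ l) (hn : f + 2 ≤ Fintype.card V)
    (h : ∀ F : Set V, FTotal f F → StrictRobust E l (f + 1) F) :
    3 * f + 1 ≤ Fintype.card V := by
  by_contra hlt
  push_neg at hlt
  classical
  obtain ⟨Ff, -, hFcard⟩ := Finset.exists_subset_card_eq (s := (Finset.univ : Finset V)) (n := f) (by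
    simpa using le_trans (by omega) hn)
  have hmcard : Ffᶜ.card = Fintype.card V - f := by
    simp [Finset.card_compl, hFcard]
  set m := Fintype.card V - f with hm
  have hm2 : 2 ≤ m := by omega
  have hm2f : m ≤ 2 * f := by omega
  obtain ⟨V1, hV1sub, hV1card⟩ := Finset.exists_subset_card_eq (s := Ffᶜ) (n := m / 2) (by omega)
  set V2 : Finset V := Ffᶜ \ V1 with hV2
  have hV2card : V2.card = m - m / 2 := by
    rw [hV2, Finset.card_sdiff_of_subset hV1sub, hmcard, hV1card]
  have hFt : FTotal f (↑Ff : Set V) := by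
    simp [FTotal, Set.ncard_coe_finset, hFcard]
  have hrob := h (↑Ff) hFt (↑V1) (↑V2) ?_ ?_ ?_ ?_ ?_
  · -- derive contradiction from the three disjuncts
    have hZ1 : ZSet (induced E (↑Ff : Set V)ᶜ) l ↑Ff (↑V1) (f + 1) = ∅ := by
      ext i
      simp only [Set.mem_empty_iff_false, iff_false]
      intro hi
      exact no_memZ_aux E l f (↑Ff) (↑V1) V2 (by
        intro j hj hjn
        simp only [hV2, Finset.mem_sdiff, Finset.mem_compl]
        constructor
        · simpa using hj
        · simpa using hjn) (by omega) i hi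
    have hZ2 : ZSet (induced E (↑Ff : Set V)ᶜ) l ↑Ff (↑V2) (f + 1) = ∅ := by
      ext i
      simp only [Set.mem_empty_iff_false, iff_false]
      intro hi
      exact no_memZ_aux E l f (↑Ff) (↑V2) V1 (by
        intro j hj hjn
        simp only [hV2, Finset.coe_sdiff, Finset.coe_compl, Set.mem_diff,
          Set.mem_compl_iff] at hjn
        by_contra hnj
        exact hjn ⟨by simpa using hj, by simpa using hnj⟩) (by omega) i hi
    have hne1 : (↑V1 : Set V).Nonempty := by
      rw [Finset.coe_nonempty, ← Finset.card_pos, hV1card]; omega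
    have hne2 : (↑V2 : Set V).Nonempty := by
      rw [Finset.coe_nonempty, ← Finset.card_pos, hV2card]; omega
    rcases hrob with h1 | h2 | h3
    · rw [hZ1] at h1; exact hne1.ne_empty h1.symm
    · rw [hZ2] at h2; exact hne2.ne_empty h2.symm
    · rw [hZ1, hZ2] at h3; simp at h3
  · rw [← Finset.coe_compl]; exact_mod_cast Finset.coe_subset.mpr hV1sub
  · rw [← Finset.coe_compl]
    exact Finset.coe_subset.mpr (hV2 ▸ Finset.sdiff_subset)
  · rw [Finset.coe_nonempty, ← Finset.card_pos, hV1card]; omega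
  · rw [Finset.coe_nonempty, ← Finset.card_pos, hV2card]; omega
  · exact_mod_cast (Finset.disjoint_coe.mpr (hV2 ▸ Finset.disjoint_sdiff))
end

section
/- Let G = (V,E) be a finite undirected graph (a directed graph with symmetric edge relation) with |V| = n, and let f ≥ 1 and l ≥ 1 be integers with n ≥ f+2. If G is (f+1)-strictly robust with l hops under the f-total model, then G is (2f+1)-connected: for every set S ⊆ V with |S| ≤ 2f and S ≠ V, the subgraph of G induced by V∖S is connected. -/
section Aux

lemma chain_mem_induced {V : Type*} (E : V → V → Prop) (W : Set V) :
    ∀ p : List V, p.Chain' (induced E W) → 2 ≤ p.length → ∀ v ∈ p, v ∈ W := by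
  intro p
  induction p with
  | nil => intro _ h; simp at h
  | cons x rest ih =>
    intro hch hlen v hv
    cases rest with
    | nil => simp at hlen
    | cons y t =>
      obtain ⟨hxy, hch'⟩ := List.isChain_cons_cons.mp hch
      rcases List.mem_cons.mp hv with rfl | hv'
      · exact hxy.2.1
      · cases t with
        | nil =>
          have : v = y := by simpa using hv'
          subst this; exact hxy.2.2
        | cons z t' =>
          exact ih hch' (by simp) v hv'

lemma cross_lemma {V : Type*} (E : V → V → Prop) (S T : Set V)
    (hcl : ∀ x w, E x w → w ∈ T → x ∉ S → x ∈ T) :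
    ∀ p : List V, ∀ j i : V, p.Chain' E → p.head? = some j → p.getLast? = some i →
      j ∉ T → i ∈ T → ∃ s ∈ p, s ∈ S ∧ s ∉ T := by
  intro p
  induction p with
  | nil => intro j i _ hh; simp at hh
  | cons x rest ih =>
    intro j i hch hh hl hjT hiT
    have hx : x = j := by simpa using hh
    subst hx
    cases rest with
    | nil =>
      have : x = i := by simpa using hl
      subst this; exact absurd hiT hjT
    | cons y t =>
      obtain ⟨hxy, hch'⟩ := List.isChain_cons_cons.mp hch
      by_cases hyT : y ∈ T
      · by_cases hxS : x ∈ S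
        · exact ⟨x, by simp, hxS, hjT⟩
        · exact absurd (hcl x y hxy hyT hxS) hjT
      · have hl' : (y :: t).getLast? = some i := by
          rw [List.getLast?_cons_cons] at hl; exact hl
        obtain ⟨s, hs, hsS, hsT⟩ := ih y i hch' rfl hl' hyT hiT
        exact ⟨s, List.mem_cons_of_mem _ hs, hsS, hsT⟩

lemma memZ_card {V : Type*} [Fintype V] (E : V → V → Prop) (l f : ℕ)
    (S F T : Set V) (hFS : F ⊆ S)
    (hcl : ∀ x w, E x w → w ∈ T → x ∉ S → x ∈ T)
    (i : V) (hi : MemZ (induced E Fᶜ) l F T (f + 1) i) :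
    f + 1 ≤ (S \ F).ncard := by
  obtain ⟨hiT, P, hP1, _, hP3⟩ := hi
  have key : ∀ a : Fin (f + 1), ∃ s, s ∈ P a ∧ s ∈ S \ F ∧ s ∉ T := by
    intro a
    obtain ⟨j, hjT, hnd, hch, hh, hl', hlen, _⟩ := hP1 a
    have hclF : ∀ x w, induced E Fᶜ x w → w ∈ T → x ∉ S → x ∈ T := by
      intro x w hxw hw hx; exact hcl x w hxw.1 hw hx
    obtain ⟨s, hs, hsS, hsT⟩ :=
      cross_lemma (induced E Fᶜ) S T hclF (P a) j i hch hh hl' hjT hiT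
    have hsF : s ∈ Fᶜ := chain_mem_induced E Fᶜ (P a) hch hlen s hs
    exact ⟨s, hs, ⟨hsS, hsF⟩, hsT⟩
  choose g hg1 hg2 hg3 using key
  have hinj : Function.Injective (fun a => (⟨g a, hg2 a⟩ : ↥(S \ F))) := by
    intro a b hab
    by_contra hne
    have hab' : g a = g b := congrArg Subtype.val hab
    have h1 : g a ∈ P b := by rw [hab']; exact hg1 b
    have h2 : g a = i := hP3 a b hne (g a) (hg1 a) h1
    exact hg3 a (h2 ▸ hiT)
  calc f + 1 = Nat.card (Fin (f + 1)) := by simp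
    _ ≤ Nat.card ↥(S \ F) := Nat.card_le_card_of_injective _ hinj
    _ = (S \ F).ncard := Nat.card_coe_set_eq _

end Aux

/-- an undirected graph with `n ≥ f+2` vertices (`f ≥ 1`) that is
`(f+1)`-strictly robust with `l` hops under the `f`-total model is `(2f+1)`-connected. -/
theorem strict_robust_connectivity {V : Type*} [Fintype V] (E : V → V → Prop)
    (hsym : Symmetric E) (f l : ℕ) (hf : 1 ≤ f) (hl : 1 ≤ l)
    (hn : f + 2 ≤ Fintype.card V)
    (h : ∀ F : Set V, FTotal f F → StrictRobust E l (f + 1) F) :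
    ∀ S : Set V, S.ncard ≤ 2 * f → S ≠ Set.univ →
      ∀ u v : V, u ∉ S → v ∉ S → Relation.ReflTransGen (induced E Sᶜ) u v := by

  intro S hScard hSne u v huS hvS
  by_contra hcon
  obtain ⟨F, hFS, hFcard⟩ : ∃ F ⊆ S, F.ncard = min f S.ncard :=
    Set.exists_subset_card_eq (min_le_right _ _)
  have hSfin : S.Finite := Set.toFinite S
  have hFf : F.ncard ≤ f := by
    rw [hFcard]; exact min_le_left _ _
  have hSF : (S \ F).ncard ≤ f := by
    rw [Set.ncard_diff hFS]
    rcases le_total f S.ncard with h' | h'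
    · rw [min_eq_left h'] at hFcard; omega
    · rw [min_eq_right h'] at hFcard; omega
  set V1 : Set V := {w | w ∉ S ∧ Relation.ReflTransGen (induced E Sᶜ) u w} with hV1
  set V2 : Set V := Sᶜ \ V1 with hV2
  have hu1 : u ∈ V1 := ⟨huS, Relation.ReflTransGen.refl⟩
  have hv2 : v ∈ V2 := ⟨hvS, fun hv1 => hcon hv1.2⟩
  have hsub1 : V1 ⊆ Fᶜ := fun x hx hxF => hx.1 (hFS hxF)
  have hsub2 : V2 ⊆ Fᶜ := fun x hx hxF => hx.1 (hFS hxF)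
  have hdisj : Disjoint V1 V2 := Set.disjoint_left.mpr fun x hx1 hx2 => hx2.2 hx1
  have hcl1 : ∀ x w, E x w → w ∈ V1 → x ∉ S → x ∈ V1 := by
    intro x w hxw hw hx
    exact ⟨hx, hw.2.tail ⟨hsym hxw, hw.1, hx⟩⟩
  have hcl2 : ∀ x w, E x w → w ∈ V2 → x ∉ S → x ∈ V2 := by
    intro x w hxw hw hx
    refine ⟨hx, fun hx1 => ?_⟩
    exact hw.2 ⟨hw.1, hx1.2.tail ⟨hxw, hx, hw.1⟩⟩
  have hrob := h F hFf V1 V2 hsub1 hsub2 ⟨u, hu1⟩ ⟨v, hv2⟩ hdisj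
  have contra1 : ∀ i, MemZ (induced E Fᶜ) l F V1 (f + 1) i → False := by
    intro i hi
    have := memZ_card E l f S F V1 hFS hcl1 i hi
    omega
  have contra2 : ∀ i, MemZ (induced E Fᶜ) l F V2 (f + 1) i → False := by
    intro i hi
    have := memZ_card E l f S F V2 hFS hcl2 i hi
    omega
  rcases hrob with hZ1 | hZ2 | hZs
  · exact contra1 u (by rw [← hZ1] at hu1; exact hu1)
  · exact contra2 v (by rw [← hZ2] at hv2; exact hv2)
  · have : 0 < (ZSet (induced E Fᶜ) l F V1 (f+1)).ncard ∨
        0 < (ZSet (induced E Fᶜ) l F V2 (f+1)).ncard := by omega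
    rcases this with hpos | hpos
    · obtain ⟨i, hi⟩ := (Set.ncard_pos (Set.toFinite _)).mp hpos
      exact contra1 i hi
    · obtain ⟨i, hi⟩ := (Set.ncard_pos (Set.toFinite _)).mp hpos
      exact contra2 i hi
end

section
/- There exists a finite undirected graph G = (V,E) (a directed graph with symmetric edge relation) that is not 2-strictly robust with 1 hop under the 1-local model, but is 2-strictly robust with 2 hops under the 1-local model. (Multi-hop relaying can strictly increase strict robustness of a fixed graph.) -/
lemma hop1 {V : Type*} {E : V → V → Prop} {j i : V} {p : List V}
    (h : IsHopPath E 1 j i p) : p = [j, i] ∧ E j i ∧ j ≠ i := by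
  obtain ⟨hnd, hch, hh, hl, h2, h3⟩ := h
  rcases p with _ | ⟨a, _ | ⟨b, _ | ⟨c, t⟩⟩⟩
  · simp at h2
  · simp at h2
  · have ha : a = j := by simpa using hh
    have hb : b = i := by simpa using hl
    subst ha; subst hb
    refine ⟨rfl, ?_, ?_⟩
    · exact (List.isChain_cons_cons.mp hch).1
    · simpa using hnd
  · simp at h3

def adjB : Fin 6 → Fin 6 → Bool := fun j i =>
  decide ((j.val, i.val) ∈ [(0,1),(1,0),(1,2),(2,1),(0,2),(2,0),(3,4),(4,3),(4,5),(5,4),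
    (3,5),(5,3),(0,3),(3,0),(1,4),(4,1),(2,5),(5,2)])

def E6 : Fin 6 → Fin 6 → Prop := fun j i => adjB j i = true

instance : DecidableRel E6 := fun j i => inferInstanceAs (Decidable (adjB j i = true))

instance (priority := 2000) decChain' {α : Type*} (R : α → α → Prop) [DecidableRel R] :
    ∀ l : List α, Decidable (l.Chain' R)
  | [] => isTrue List.isChain_nil
  | [_] => isTrue (List.isChain_singleton _)
  | a :: b :: l =>
    @decidable_of_iff _ _ (List.isChain_cons_cons (a := a) (b := b) (l := l)).symm
      (@instDecidableAnd _ _ _ (decChain' R (b :: l)))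

instance decHop {V : Type*} [DecidableEq V] (E : V → V → Prop) [DecidableRel E]
    (l : ℕ) (j i : V) (p : List V) : Decidable (IsHopPath E l j i p) :=
  inferInstanceAs (Decidable (p.Nodup ∧ p.Chain' E ∧ p.head? = some j ∧ p.getLast? = some i ∧
    2 ≤ p.length ∧ p.length ≤ l + 1))

instance decCoe (Fs : Finset (Fin 6)) : DecidablePred (· ∈ (↑Fs : Set (Fin 6))) :=
  fun x => inferInstanceAs (Decidable (x ∈ Fs))
instance decCoeC (Fs : Finset (Fin 6)) : DecidablePred (· ∈ (↑Fs : Set (Fin 6))ᶜ) :=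
  fun x => inferInstanceAs (Decidable ¬(x ∈ Fs))
instance decInd {V : Type*} (E : V → V → Prop) [DecidableRel E] (W : Set V)
    [DecidablePred (· ∈ W)] : DecidableRel (induced E W) := fun j i =>
  inferInstanceAs (Decidable (E j i ∧ j ∈ W ∧ i ∈ W))

def endLists (i : Fin 6) : List (List (Fin 6)) :=
  (List.finRange 6).map (fun a => [a, i]) ++
  (List.finRange 6).flatMap (fun a => (List.finRange 6).map (fun b => [a, b, i]))

def ok6 (Fs S : Finset (Fin 6)) (i : Fin 6) (p : List (Fin 6)) : Prop :=
  p.headI ∉ S ∧ IsHopPath (induced E6 (↑Fs : Set (Fin 6))ᶜ) 2 p.headI i p ∧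
    ∀ v ∈ interm p, v ∉ (↑Fs : Set (Fin 6))
instance (Fs S : Finset (Fin 6)) (i : Fin 6) (p : List (Fin 6)) : Decidable (ok6 Fs S i p) :=
  inferInstanceAs (Decidable (_ ∧ _ ∧ ∀ v ∈ interm p, v ∉ (↑Fs : Set (Fin 6))))

def good6 (Fs S : Finset (Fin 6)) (i : Fin 6) : Prop :=
  ∃ p1 ∈ endLists i, ok6 Fs S i p1 ∧ ∃ p2 ∈ endLists i, ok6 Fs S i p2 ∧
    ∀ x ∈ p1, x ∈ p2 → x = i
instance (Fs S : Finset (Fin 6)) (i : Fin 6) : Decidable (good6 Fs S i) :=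
  inferInstanceAs (Decidable (∃ p1 ∈ endLists i, ok6 Fs S i p1 ∧ ∃ p2 ∈ endLists i,
    ok6 Fs S i p2 ∧ ∀ x ∈ p1, x ∈ p2 → x = i))

set_option maxRecDepth 100000 in
theorem diam2 : ∀ j i : Fin 6, j ≠ i → ∃ p ∈ endLists i, IsHopPath E6 2 j i p := by decide

set_option maxRecDepth 1000000 in
set_option maxHeartbeats 4000000 in
theorem core6 : ∀ Fs : Finset (Fin 6), Fs.card ≤ 1 → ∀ S : Finset (Fin 6),
    (∀ x ∈ S, x ∉ Fs) → S.Nonempty → 2 ≤ (Fsᶜ \ S).card → ∃ i ∈ S, good6 Fs S i := by decide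

-- classification of 1-local (2-hop) fault sets
lemma classify (F : Set (Fin 6)) (h : FLocal E6 2 1 F) :
    F = ∅ ∨ (∃ v, F = {v}) ∨ F = Set.univ := by
  by_contra hcon
  push_neg at hcon
  obtain ⟨h0, hsing, huniv⟩ := hcon
  obtain ⟨i, hi⟩ : ∃ i, i ∉ F := by
    by_contra hc; push_neg at hc; exact huniv (Set.eq_univ_of_forall hc)
  obtain ⟨u, hu⟩ : F.Nonempty := h0
  obtain ⟨v, hv, hvu⟩ : ∃ v ∈ F, v ≠ u := by
    by_contra hc; push_neg at hc
    exact hsing u (Set.eq_singleton_iff_unique_mem.mpr ⟨hu, hc⟩)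
  have hsub : ({u, v} : Set (Fin 6)) ⊆ {j ∈ F | ∃ p, IsHopPath E6 2 j i p} := by
    intro x hx
    rcases hx with rfl | rfl
    · refine ⟨hu, ?_⟩
      obtain ⟨p, _, hp⟩ := diam2 x i (fun he => hi (he ▸ hu))
      exact ⟨p, hp⟩
    · refine ⟨hv, ?_⟩
      obtain ⟨p, _, hp⟩ := diam2 x i (fun he => hi (he ▸ hv))
      exact ⟨p, hp⟩
  have h2 : 2 ≤ {j ∈ F | ∃ p, IsHopPath E6 2 j i p}.ncard := by
    have := Set.ncard_le_ncard hsub (Set.toFinite _)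
    rwa [Set.ncard_pair (Ne.symm hvu)] at this
  have := h i hi
  omega

lemma solveOne (F : Set (Fin 6)) (Fs : Finset (Fin 6)) (hF : ↑Fs = F)
    (hc : Fs.card ≤ 1)
    (V1 : Set (Fin 6)) (S1 : Finset (Fin 6)) (hS1 : ∀ x, x ∈ S1 ↔ x ∈ V1)
    (h1 : V1 ⊆ Fᶜ) (hne : V1.Nonempty) (hbig : 2 ≤ (Fsᶜ \ S1).card) :
    (ZSet (induced E6 Fᶜ) 2 F V1 2).Nonempty := by
  have hsub : ∀ x ∈ S1, x ∉ Fs := by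
    intro x hx hxF
    exact (h1 ((hS1 x).mp hx)) (by rw [← hF]; exact hxF)
  have hne' : S1.Nonempty := ⟨hne.choose, (hS1 _).mpr hne.choose_spec⟩
  obtain ⟨i, hiS, p1, hp1m, hok1, p2, hp2m, hok2, hind⟩ := core6 Fs hc S1 hsub hne' hbig
  obtain ⟨hj1, hp1, hint1⟩ := hok1
  obtain ⟨hj2, hp2, hint2⟩ := hok2
  rw [hF] at hp1 hp2 hint1 hint2
  refine ⟨i, (hS1 i).mp hiS, fun a => if a = 0 then p1 else p2, ?_, ?_, ?_⟩
  · intro a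
    by_cases ha : a = 0
    · exact ⟨p1.headI, fun hm => hj1 ((hS1 _).mpr hm), by simpa [ha] using hp1⟩
    · exact ⟨p2.headI, fun hm => hj2 ((hS1 _).mpr hm), by simpa [ha] using hp2⟩
  · intro a v hv
    by_cases ha : a = 0
    · simp only [ha, if_pos] at hv; exact hint1 v hv
    · simp only [ha, if_neg, ite_false] at hv; exact hint2 v hv
  · intro a b hab v hva hvb
    by_cases ha : a = 0
    · have hb : ¬ b = 0 := fun h => hab (by rw [ha, h])
      simp only [ha, if_pos] at hva; simp only [hb, ite_false] at hvb
      exact hind v hva hvb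
    · by_cases hb : b = 0
      · simp only [ha, ite_false] at hva; simp only [hb, if_pos] at hvb
        exact hind v hvb hva
      · exfalso; apply hab
        have ha' : a.val ≠ 0 := fun h => ha (Fin.ext h)
        have hb' : b.val ≠ 0 := fun h => hb (Fin.ext h)
        have := a.isLt; have := b.isLt
        exact Fin.ext (by omega)

lemma pos6 (F : Set (Fin 6)) (Fs : Finset (Fin 6)) (hF : ↑Fs = F) (hc : Fs.card ≤ 1) :
    StrictRobust E6 2 2 F := by
  classical
  intro V1 V2 h1 h2 hne1 hne2 hdis
  set S1 := Finset.univ.filter (· ∈ V1) with hS1def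
  set S2 := Finset.univ.filter (· ∈ V2) with hS2def
  have m1 : ∀ x, x ∈ S1 ↔ x ∈ V1 := by intro x; simp [hS1def]
  have m2 : ∀ x, x ∈ S2 ↔ x ∈ V2 := by intro x; simp [hS2def]
  have hsub1 : S1 ⊆ Fsᶜ := by
    intro x hx
    rw [Finset.mem_compl]
    intro hxF
    exact (h1 ((m1 x).mp hx)) (by rw [← hF]; exact hxF)
  have hsub2 : S2 ⊆ Fsᶜ := by
    intro x hx
    rw [Finset.mem_compl]
    intro hxF
    exact (h2 ((m2 x).mp hx)) (by rw [← hF]; exact hxF)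
  have big : 2 ≤ (Fsᶜ \ S1).card ∨ 2 ≤ (Fsᶜ \ S2).card := by
    by_contra hcc
    push_neg at hcc
    have hd : Disjoint S1 S2 := by
      rw [Finset.disjoint_left]
      intro x hx1 hx2
      exact (Set.disjoint_left.mp hdis ((m1 x).mp hx1)) ((m2 x).mp hx2)
    have e1 : (Fsᶜ \ S1).card = Fsᶜ.card - S1.card := Finset.card_sdiff_of_subset hsub1
    have e2 : (Fsᶜ \ S2).card = Fsᶜ.card - S2.card := Finset.card_sdiff_of_subset hsub2
    have e3 : S1.card + S2.card ≤ Fsᶜ.card := by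
      rw [← Finset.card_union_of_disjoint hd]
      exact Finset.card_le_card (Finset.union_subset hsub1 hsub2)
    have e4 : Fsᶜ.card = 6 - Fs.card := by rw [Finset.card_compl]; simp
    have h1c : S1.card ≤ Fsᶜ.card := Finset.card_le_card hsub1
    have h2c : S2.card ≤ Fsᶜ.card := Finset.card_le_card hsub2
    omega
  right; right
  rcases big with hbig | hbig
  · have hZ := solveOne F Fs hF hc V1 S1 m1 h1 hne1 hbig
    have := (Set.ncard_pos (Set.toFinite _)).mpr hZ
    omega
  · have hZ := solveOne F Fs hF hc V2 S2 m2 h2 hne2 hbig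
    have := (Set.ncard_pos (Set.toFinite _)).mpr hZ
    omega

def F0 : Set (Fin 6) := {0, 3}

lemma flocal1 : FLocal E6 1 1 F0 := by
  intro i hi
  have hi' : i ≠ 0 ∧ i ≠ 3 := by simpa [F0, not_or] using hi
  have key : ∀ i j : Fin 6, i ≠ 0 → i ≠ 3 → (j = 0 ∨ j = 3) → E6 j i →
      j = (if i.val < 3 then (0 : Fin 6) else 3) := by decide
  have hsub : {j ∈ F0 | ∃ p, IsHopPath E6 1 j i p} ⊆
      {if i.val < 3 then (0 : Fin 6) else 3} := by
    rintro j ⟨hjF, p, hp⟩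
    obtain ⟨_, hE, _⟩ := hop1 hp
    have hj' : j = 0 ∨ j = 3 := by simpa [F0] using hjF
    exact Set.mem_singleton_iff.mpr (key i j hi'.1 hi'.2 hj' hE)
  have := Set.ncard_le_ncard hsub (Set.toFinite _)
  simpa using this

lemma Zem12 : ZSet (induced E6 F0ᶜ) 1 F0 {1, 2} 2 = ∅ := by
  ext i
  simp only [ZSet, Set.mem_setOf_eq, Set.mem_empty_iff_false, iff_false]
  rintro ⟨hiV, P, hP, hint, hind⟩
  obtain ⟨j0, hj0, hp0⟩ := hP 0
  obtain ⟨j1, hj1, hp1⟩ := hP 1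
  obtain ⟨he0, hE0, hne0⟩ := hop1 hp0
  obtain ⟨he1, hE1, hne1⟩ := hop1 hp1
  obtain ⟨hE0', hj0F, hiF⟩ := hE0
  obtain ⟨hE1', hj1F, -⟩ := hE1
  have hiv : i = 1 ∨ i = 2 := by simpa using hiV
  have hj0v : j0 ≠ 1 ∧ j0 ≠ 2 := by simpa [not_or] using hj0
  have hj1v : j1 ≠ 1 ∧ j1 ≠ 2 := by simpa [not_or] using hj1
  have hj0F' : j0 ≠ 0 ∧ j0 ≠ 3 := by simpa [F0, not_or] using hj0F
  have hj1F' : j1 ≠ 0 ∧ j1 ≠ 3 := by simpa [F0, not_or] using hj1F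
  have key : ∀ i j : Fin 6, (i = 1 ∨ i = 2) → j ≠ 1 → j ≠ 2 → j ≠ 0 → j ≠ 3 →
      E6 j i → j = i + 3 := by decide
  have e0 : j0 = i + 3 := key i j0 hiv hj0v.1 hj0v.2 hj0F'.1 hj0F'.2 hE0'
  have e1 : j1 = i + 3 := key i j1 hiv hj1v.1 hj1v.2 hj1F'.1 hj1F'.2 hE1'
  have : j0 = i := hind 0 1 (by decide) j0 (by rw [he0]; simp) (by rw [he1, e1, ← e0]; simp)
  exact hne0 this

lemma Zem45 : ZSet (induced E6 F0ᶜ) 1 F0 {4, 5} 2 = ∅ := by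
  ext i
  simp only [ZSet, Set.mem_setOf_eq, Set.mem_empty_iff_false, iff_false]
  rintro ⟨hiV, P, hP, hint, hind⟩
  obtain ⟨j0, hj0, hp0⟩ := hP 0
  obtain ⟨j1, hj1, hp1⟩ := hP 1
  obtain ⟨he0, hE0, hne0⟩ := hop1 hp0
  obtain ⟨he1, hE1, hne1⟩ := hop1 hp1
  obtain ⟨hE0', hj0F, hiF⟩ := hE0
  obtain ⟨hE1', hj1F, -⟩ := hE1
  have hiv : i = 4 ∨ i = 5 := by simpa using hiV
  have hj0v : j0 ≠ 4 ∧ j0 ≠ 5 := by simpa [not_or] using hj0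
  have hj1v : j1 ≠ 4 ∧ j1 ≠ 5 := by simpa [not_or] using hj1
  have hj0F' : j0 ≠ 0 ∧ j0 ≠ 3 := by simpa [F0, not_or] using hj0F
  have hj1F' : j1 ≠ 0 ∧ j1 ≠ 3 := by simpa [F0, not_or] using hj1F
  have key : ∀ i j : Fin 6, (i = 4 ∨ i = 5) → j ≠ 4 → j ≠ 5 → j ≠ 0 → j ≠ 3 →
      E6 j i → j = i - 3 := by decide
  have e0 : j0 = i - 3 := key i j0 hiv hj0v.1 hj0v.2 hj0F'.1 hj0F'.2 hE0'
  have e1 : j1 = i - 3 := key i j1 hiv hj1v.1 hj1v.2 hj1F'.1 hj1F'.2 hE1'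
  have : j0 = i := hind 0 1 (by decide) j0 (by rw [he0]; simp) (by rw [he1, e1, ← e0]; simp)
  exact hne0 this

lemma notstrict : ¬ StrictRobust E6 1 2 F0 := by
  intro h
  have hsub1 : ({1, 2} : Set (Fin 6)) ⊆ F0ᶜ := by
    rintro x (rfl | hx)
    · simp [F0]
    · rw [Set.mem_singleton_iff] at hx; subst hx; simp [F0]
  have hsub2 : ({4, 5} : Set (Fin 6)) ⊆ F0ᶜ := by
    rintro x (rfl | hx)
    · simp [F0]
    · rw [Set.mem_singleton_iff] at hx; subst hx; simp [F0]
  have hdis : Disjoint ({1, 2} : Set (Fin 6)) {4, 5} := by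
    rw [Set.disjoint_left]
    rintro a (rfl | ha) hb
    · simp at hb
    · rw [Set.mem_singleton_iff] at ha; subst ha; simp at hb
  have := h {1, 2} {4, 5} hsub1 hsub2 ⟨1, by simp⟩ ⟨4, by simp⟩ hdis
  rw [Zem12, Zem45] at this
  rcases this with h' | h' | h'
  · have : (1 : Fin 6) ∈ (∅ : Set (Fin 6)) := by rw [h']; simp
    simp at this
  · have : (4 : Fin 6) ∈ (∅ : Set (Fin 6)) := by rw [h']; simp
    simp at this
  · simp [Set.ncard_empty] at h'

/-- there is a finite undirected graph that is not 2-strictly robust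
with 1 hop under the 1-local model, but is 2-strictly robust with 2 hops under the
1-local model (the `f`-local model being taken in `l`-hop neighbors). -/
theorem exists_strict_robust_improved_by_hops :
    ∃ (n : ℕ) (E : Fin n → Fin n → Prop), Symmetric E ∧
      ¬ (∀ F : Set (Fin n), FLocal E 1 1 F → StrictRobust E 1 2 F) ∧
      (∀ F : Set (Fin n), FLocal E 2 1 F → StrictRobust E 2 2 F) := by

  refine ⟨6, E6, ?_, ?_, ?_⟩
  · have h : ∀ a b : Fin 6, E6 a b → E6 b a := by decide
    exact fun a b hab => h a b hab
  · intro hall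
    exact notstrict (hall F0 flocal1)
  · intro F hloc
    rcases classify F hloc with rfl | ⟨v, rfl⟩ | rfl
    · exact pos6 ∅ ∅ (by simp) (by simp)
    · exact pos6 {v} {v} (by simp) (by simp)
    · intro V1 V2 h1 _ hne1 _ _
      obtain ⟨x, hx⟩ := hne1
      have := h1 hx
      simp at this
end

section
/- For every n ≥ 2 and every l ≥ 1, the complete directed graph on n vertices (with an edge between every ordered pair of distinct vertices) is ⌈n/2⌉-robust with l hops with respect to every set F ⊆ V. Combined with the bound r ≤ ⌈n/2⌉, complete networks achieve the largest possible robustness. -/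
lemma zset_complete_eq {n : ℕ} (l : ℕ) (hl : 1 ≤ l) (F S : Set (Fin n)) (r : ℕ)
    (h : r ≤ Sᶜ.ncard) : ZSet (fun j i : Fin n => j ≠ i) l F S r = S := by
  ext i
  refine ⟨fun h => h.1, fun hi => ⟨hi, ?_⟩⟩
  have hfin : (Sᶜ : Set (Fin n)).Finite := Set.toFinite _
  have hcard : r ≤ hfin.toFinset.card := by
    rwa [← Set.ncard_eq_toFinset_card _ hfin]
  set f := Finset.orderEmbOfCardLe hfin.toFinset hcard with hf
  have hmem : ∀ a : Fin r, (f a : Fin n) ∉ S := by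
    intro a
    have := Finset.orderEmbOfCardLe_mem hfin.toFinset hcard a
    simpa using this
  have hne : ∀ a : Fin r, (f a : Fin n) ≠ i := fun a he => hmem a (he ▸ hi)
  refine ⟨fun a => [f a, i], fun a => ⟨f a, hmem a, ?_⟩, ?_, ?_⟩
  · refine ⟨by simp [hne a], List.isChain_pair.2 (hne a), rfl, rfl, by simp, by simp; omega⟩
  · intro a v hv
    simp [interm] at hv
  · intro a b hab v hva hvb
    simp only [List.mem_cons, List.mem_singleton, List.not_mem_nil, or_false] at hva hvb
    rcases hva with h1 | h1
    · rcases hvb with h2 | h2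
      · exact absurd (f.injective (h1.symm.trans h2)) hab
      · exact h2
    · exact h1

/-- for every `n ≥ 2` and `l ≥ 1`, the complete digraph on `n` vertices
is `⌈n/2⌉`-robust with `l` hops with respect to every `F`. -/
theorem complete_graph_max_robust (n : ℕ) (hn : 2 ≤ n) (l : ℕ) (hl : 1 ≤ l)
    (F : Set (Fin n)) :
    RSRobust (fun j i : Fin n => j ≠ i) l ((n + 1) / 2) 1 F := by
  intro V1 V2 _ _ h1 h2 hd
  have hsum : V1.ncard + V2.ncard ≤ n := by
    have := Set.ncard_union_eq hd (Set.toFinite V1) (Set.toFinite V2)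
    have hle : (V1 ∪ V2).ncard ≤ (Set.univ : Set (Fin n)).ncard :=
      Set.ncard_le_ncard (Set.subset_univ _) (Set.toFinite _)
    rw [Set.ncard_univ, Nat.card_eq_fintype_card, Fintype.card_fin] at hle
    omega
  have hc1 : V1.ncard + V1ᶜ.ncard = n := by
    have := Set.ncard_add_ncard_compl V1
    rwa [Nat.card_eq_fintype_card, Fintype.card_fin] at this
  have hc2 : V2.ncard + V2ᶜ.ncard = n := by
    have := Set.ncard_add_ncard_compl V2
    rwa [Nat.card_eq_fintype_card, Fintype.card_fin] at this
  have h2pos : 0 < V2.ncard := (Set.ncard_pos (Set.toFinite _)).2 h2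
  rcases le_or_gt V1.ncard (n / 2) with hle | hlt
  · exact Or.inl (zset_complete_eq l hl F V1 _ (by omega))
  · exact Or.inr (Or.inl (zset_complete_eq l hl F V2 _ (by omega)))
end

section
/- Let I be a nonempty finite index set, τ ∈ ℕ, and for each i ∈ I let x_i : ℕ → ℝ. For k ∈ ℕ define the windowed extremes X̄[k] = max over i ∈ I and s with max(0, k−τ) ≤ s ≤ k of x_i[s], and X̲[k] = min over the same range of x_i[s]. Suppose that for every i ∈ I and every k ∈ ℕ, X̲[k] ≤ x_i[k+1] ≤ X̄[k]. Then X̄ is nonincreasing in k and X̲ is nondecreasing in k; consequently x_i[k] ∈ [X̲[0], X̄[0]] for every i ∈ I and every k ∈ ℕ, and both limits lim X̄[k] and lim X̲[k] exist. -/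
/-- safety/monotonicity of the windowed extremes.  Here `Xbar k`
(resp. `Xlow k`) is the maximum (resp. minimum) of the values `x i s` over all
`i ∈ I` and `max (0, k - τ) ≤ s ≤ k` (note `k - τ` is truncated subtraction), each
characterized by being an upper (resp. lower) bound that is attained.  If every
next value `x i (k+1)` lies between `Xlow k` and `Xbar k`, then `Xbar` is
nonincreasing, `Xlow` is nondecreasing, all values stay in `[Xlow 0, Xbar 0]`,
and both limits exist. -/
theorem windowed_extremes_monotone {I : Type*} [Fintype I] [Nonempty I]
    (τ : ℕ) (x : I → ℕ → ℝ) (Xbar Xlow : ℕ → ℝ)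
    (hXbar_ub : ∀ k : ℕ, ∀ i : I, ∀ s : ℕ, k - τ ≤ s → s ≤ k → x i s ≤ Xbar k)
    (hXbar_mem : ∀ k : ℕ, ∃ i : I, ∃ s : ℕ, k - τ ≤ s ∧ s ≤ k ∧ Xbar k = x i s)
    (hXlow_lb : ∀ k : ℕ, ∀ i : I, ∀ s : ℕ, k - τ ≤ s → s ≤ k → Xlow k ≤ x i s)
    (hXlow_mem : ∀ k : ℕ, ∃ i : I, ∃ s : ℕ, k - τ ≤ s ∧ s ≤ k ∧ Xlow k = x i s)
    (hstep : ∀ i : I, ∀ k : ℕ, Xlow k ≤ x i (k + 1) ∧ x i (k + 1) ≤ Xbar k) :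
    Antitone Xbar ∧ Monotone Xlow ∧
      (∀ i : I, ∀ k : ℕ, Xlow 0 ≤ x i k ∧ x i k ≤ Xbar 0) ∧
      (∃ a : ℝ, Filter.Tendsto Xbar Filter.atTop (nhds a)) ∧
      (∃ b : ℝ, Filter.Tendsto Xlow Filter.atTop (nhds b)) := by
  have hbar : ∀ k, Xbar (k + 1) ≤ Xbar k := by
    intro k
    obtain ⟨i, s, h1, h2, h3⟩ := hXbar_mem (k + 1)
    rw [h3]
    rcases Nat.lt_or_ge s (k + 1) with hs | hs
    · exact hXbar_ub k i s (le_trans (Nat.sub_le_sub_right (Nat.le_succ k) τ) h1)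
        (Nat.lt_succ_iff.mp hs)
    · have : s = k + 1 := le_antisymm h2 hs
      subst this
      exact (hstep i k).2
  have hlow : ∀ k, Xlow k ≤ Xlow (k + 1) := by
    intro k
    obtain ⟨i, s, h1, h2, h3⟩ := hXlow_mem (k + 1)
    rw [h3]
    rcases Nat.lt_or_ge s (k + 1) with hs | hs
    · exact hXlow_lb k i s (le_trans (Nat.sub_le_sub_right (Nat.le_succ k) τ) h1)
        (Nat.lt_succ_iff.mp hs)
    · have : s = k + 1 := le_antisymm h2 hs
      subst this
      exact (hstep i k).1
  have hanti : Antitone Xbar := antitone_nat_of_succ_le hbar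
  have hmono : Monotone Xlow := monotone_nat_of_le_succ hlow
  have hsafe : ∀ i : I, ∀ k : ℕ, Xlow 0 ≤ x i k ∧ x i k ≤ Xbar 0 := by
    intro i k
    cases k with
    | zero => exact ⟨hXlow_lb 0 i 0 (by simp) le_rfl,
        hXbar_ub 0 i 0 (by simp) le_rfl⟩
    | succ k =>
      exact ⟨le_trans (hmono (Nat.zero_le k)) (hstep i k).1,
        le_trans (hstep i k).2 (hanti (Nat.zero_le k))⟩
  have hle : ∀ k, Xlow 0 ≤ Xbar k := by
    intro k
    obtain ⟨i, s, h1, h2, h3⟩ := hXbar_mem k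
    rw [h3]; exact (hsafe i s).1
  have hge : ∀ k, Xlow k ≤ Xbar 0 := by
    intro k
    obtain ⟨i, s, h1, h2, h3⟩ := hXlow_mem k
    rw [h3]; exact (hsafe i s).2
  refine ⟨hanti, hmono, hsafe, ?_, ?_⟩
  · exact ⟨_, tendsto_atTop_ciInf hanti ⟨Xlow 0, by rintro y ⟨k, rfl⟩; exact hle k⟩⟩
  · exact ⟨_, tendsto_atTop_ciSup hmono ⟨Xbar 0, by rintro y ⟨k, rfl⟩; exact hge k⟩⟩
end
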